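/- Let t > 0 and let N be a real-valued differentiable function on [t, S], where t ≤ S ≤ ((2 + 2·N(t))/(1 + 2·N(t)))^{1/2}·t. Assume N(x) > 0 for all x ∈ [t, S] and that N'(x) ≤ 2·(N(x) + N(x)²)/x for all x ∈ [t, S]. Then N(s) ≤ 2·N(t) for every s ∈ [t, S]. -/

import Mathlib

/-- If `N > 0` is differentiable on `[t,S]` with
`N' ≤ 2(N+N²)/x` and `S ≤ ((2+2N(t))/(1+2N(t)))^{1/2}·t`, then `N(s) ≤ 2N(t)` on `[t,S]`. -/
theorem stmt_4 (t S : ℝ) (ht : 0 < t) (N N' : ℝ → ℝ)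
    (hS : t ≤ S) (hS' : S ≤ Real.sqrt ((2 + 2 * N t) / (1 + 2 * N t)) * t)
    (hderiv : ∀ x ∈ Set.Icc t S, HasDerivWithinAt N (N' x) (Set.Icc t S) x)
    (hpos : ∀ x ∈ Set.Icc t S, 0 < N x)
    (hineq : ∀ x ∈ Set.Icc t S, N' x ≤ 2 * (N x + N x ^ 2) / x) :
    ∀ s ∈ Set.Icc t S, N s ≤ 2 * N t := by
  intro s hs
  obtain ⟨hts, hsS⟩ := hs
  have htmem : t ∈ Set.Icc t S := ⟨le_refl t, hS⟩
  have hsmem : s ∈ Set.Icc t S := ⟨hts, hsS⟩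
  have hNt : 0 < N t := hpos t htmem
  have hNs : 0 < N s := hpos s hsmem
  have hposx : ∀ x ∈ Set.Icc t S, (0:ℝ) < x := fun x hx => lt_of_lt_of_le ht hx.1
  set f : ℝ → ℝ := fun x => Real.log (N x) - Real.log (1 + N x) - 2 * Real.log x with hf
  have hcontN : ContinuousOn N (Set.Icc t S) :=
    fun x hx => (hderiv x hx).continuousWithinAt
  have hcont : ContinuousOn f (Set.Icc t S) := by
    apply ContinuousOn.sub
    · exact (hcontN.log (fun x hx => (hpos x hx).ne')).sub
        ((continuousOn_const.add hcontN).log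
          (fun x hx => by have := hpos x hx; exact (by linarith : (0:ℝ) < 1 + N x).ne'))
    · exact continuousOn_const.mul
        (Real.continuousOn_log.mono (fun x hx => by
          simp only [Set.mem_compl_iff, Set.mem_singleton_iff]
          exact (hposx x hx).ne'))
  -- derivative data on the interior
  have hderiv' : ∀ x ∈ interior (Set.Icc t S),
      HasDerivAt f (N' x / N x - N' x / (1 + N x) - 2 * x⁻¹) x := by
    intro x hx
    rw [interior_Icc] at hx
    have hxmem : x ∈ Set.Icc t S := ⟨hx.1.le, hx.2.le⟩
    have hxpos : 0 < x := hposx x hxmem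
    have hNx : 0 < N x := hpos x hxmem
    have hN : HasDerivAt N (N' x) x :=
      (hderiv x hxmem).hasDerivAt (Icc_mem_nhds hx.1 hx.2)
    have h1 : HasDerivAt (fun y => Real.log (N y)) (N' x / N x) x :=
      hN.log hNx.ne'
    have h2 : HasDerivAt (fun y => Real.log (1 + N y)) (N' x / (1 + N x)) x := by
      have := ((hasDerivAt_const x (1:ℝ)).add hN).log (by linarith : (0:ℝ) < 1 + N x).ne'
      simpa using this
    have h3 : HasDerivAt (fun y => 2 * Real.log y) (2 * x⁻¹) x :=
      (Real.hasDerivAt_log hxpos.ne').const_mul 2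
    exact (h1.sub h2).sub h3
  have hanti : AntitoneOn f (Set.Icc t S) := by
    apply antitoneOn_of_deriv_nonpos (convex_Icc t S) hcont
    · intro x hx
      exact (hderiv' x hx).differentiableAt.differentiableWithinAt
    · intro x hx
      rw [(hderiv' x hx).deriv]
      rw [interior_Icc] at hx
      have hxmem : x ∈ Set.Icc t S := ⟨hx.1.le, hx.2.le⟩
      have hxpos : 0 < x := hposx x hxmem
      have hNx : 0 < N x := hpos x hxmem
      have h1 : N' x * x ≤ 2 * (N x + N x ^ 2) :=
        (le_div_iff₀ hxpos).mp (hineq x hxmem)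
      have h2 : N' x / N x - N' x / (1 + N x) = N' x / (N x * (1 + N x)) := by
        field_simp
        ring
      rw [h2, sub_nonpos, div_le_iff₀ (by positivity : (0:ℝ) < N x * (1 + N x))]
      have : N' x ≤ 2 * x⁻¹ * (N x * (1 + N x)) := by
        rw [show 2 * x⁻¹ * (N x * (1 + N x)) = 2 * (N x + N x ^ 2) / x by
          field_simp]
        rw [le_div_iff₀ hxpos]
        exact h1
      linarith
  have hfle : f s ≤ f t := hanti htmem hsmem hts
  -- unpack the inequality
  set a := N s with ha
  set b := N t with hb
  have h1a : (0:ℝ) < 1 + a := by positivity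
  have h1b : (0:ℝ) < 1 + b := by positivity
  have hspos : 0 < s := hposx s hsmem
  have hlog : Real.log (a / (1 + a)) ≤ Real.log (b / (1 + b) * (s / t) ^ 2) := by
    rw [Real.log_div hNs.ne' h1a.ne',
      Real.log_mul (by positivity) (by positivity),
      Real.log_div hNt.ne' h1b.ne', Real.log_pow,
      Real.log_div hspos.ne' ht.ne']
    simp only [hf] at hfle
    push_cast
    linarith
  have hdiv : a / (1 + a) ≤ b / (1 + b) * (s / t) ^ 2 := by
    have := Real.exp_le_exp.mpr hlog
    rwa [Real.exp_log (by positivity), Real.exp_log (by positivity)] at this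
  -- bound (s/t)^2
  have hc : (0:ℝ) < (2 + 2 * b) / (1 + 2 * b) := by positivity
  have hs2 : s ^ 2 ≤ (2 + 2 * b) / (1 + 2 * b) * t ^ 2 := by
    have hsle : s ≤ Real.sqrt ((2 + 2 * b) / (1 + 2 * b)) * t := hsS.trans hS'
    have := pow_le_pow_left₀ hspos.le hsle 2
    rwa [mul_pow, Real.sq_sqrt hc.le] at this
  have hst2 : (s / t) ^ 2 ≤ (2 + 2 * b) / (1 + 2 * b) := by
    rw [div_pow, div_le_iff₀ (by positivity)]
    linarith
  have hkey : a / (1 + a) ≤ 2 * b / (1 + 2 * b) := by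
    have h1 : b / (1 + b) * ((s / t) ^ 2) ≤ b / (1 + b) * ((2 + 2 * b) / (1 + 2 * b)) :=
      mul_le_mul_of_nonneg_left hst2 (by positivity)
    have h2 : b / (1 + b) * ((2 + 2 * b) / (1 + 2 * b)) = 2 * b / (1 + 2 * b) := by
      have h12b : (0:ℝ) < 1 + 2 * b := by positivity
      field_simp
    linarith
  have h12b : (0:ℝ) < 1 + 2 * b := by positivity
  rw [div_le_div_iff₀ h1a h12b] at hkey
  nlinarith [hkey]
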